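/- Let F be a field, B a unital F-algebra, and h ∈ Z(B)[x] with leading coefficient that is not a zero divisor. Then the B-linear algebra homomorphism ψ: A_h(B) → A_1(B) determined by ψ(x) = x, ψ(ŷ) = y·h (where A_1(B) is the Weyl algebra over B with [y,x] = 1) is injective. -/

import Mathlib

open scoped TensorProduct
noncomputable section
variable (F : Type*) [Field F] (B : Type*) [Ring B] [Algebra F B]

/-- B⟨x,y⟩, the free B-ring on x,y commuting with B, realized as B ⊗[F] F⟨x,y⟩. -/
abbrev BFreeXY := B ⊗[F] FreeAlgebra F (Fin 2)

def Xg : BFreeXY F B := 1 ⊗ₜ FreeAlgebra.ι F 0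
def Yg : BFreeXY F B := 1 ⊗ₜ FreeAlgebra.ι F 1

/-- The image of a polynomial a ∈ B[x] inside B⟨x,y⟩. -/
def polyEl (a : Polynomial B) : BFreeXY F B :=
  a.sum fun n b => b ⊗ₜ[F] (FreeAlgebra.ι F 0) ^ n

/-- The relation yx = xy + h. -/
def AhRel (h : Polynomial B) : BFreeXY F B → BFreeXY F B → Prop :=
  fun a b => a = Yg F B * Xg F B ∧ b = Xg F B * Yg F B + polyEl F B h

/-- The parametric Weyl algebra A_h(B) = B⟨x,y⟩/⟨yx − xy − h⟩. -/
abbrev Ah (h : Polynomial B) := RingQuot (AhRel F B h)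

def mkh (h : Polynomial B) : BFreeXY F B →+* Ah F B h := RingQuot.mkRingHom (AhRel F B h)


def incB (h : Polynomial B) : B →+* Ah F B h :=
  (mkh F B h).comp (Algebra.TensorProduct.includeLeftRingHom)

/-- b is not a (two-sided) zero divisor of B. -/
def NotZD {B : Type*} [Ring B] (b : B) : Prop :=
  ∀ c : B, (c * b = 0 → c = 0) ∧ (b * c = 0 → c = 0)

namespace Stmt8Aux
open Polynomial

/-- polynomial-in-x embedding into B⟨x,y⟩ as a ring hom -/
def pX : Polynomial B →+* BFreeXY F B :=
  eval₂RingHom' (Algebra.TensorProduct.includeLeftRingHom) (Xg F B) (fun b => by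
    show (b ⊗ₜ[F] (1 : FreeAlgebra F (Fin 2))) * (1 ⊗ₜ[F] FreeAlgebra.ι F 0)
      = (1 ⊗ₜ[F] FreeAlgebra.ι F 0) * (b ⊗ₜ[F] 1)
    simp [Algebra.TensorProduct.tmul_mul_tmul])

lemma pX_apply (q : Polynomial B) :
    pX F B q = eval₂ (Algebra.TensorProduct.includeLeftRingHom) (Xg F B) q := rfl

lemma pX_C (b : B) : pX F B (C b) = b ⊗ₜ[F] 1 := by
  rw [pX_apply, eval₂_C]; rfl

lemma pX_monomial (n : ℕ) (b : B) :
    pX F B (monomial n b) = (b ⊗ₜ[F] 1) * (Xg F B) ^ n := by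
  rw [pX_apply, eval₂_monomial]; rfl

/-- the polynomial that `polyEl h` really embeds -/
def htil {B : Type*} [Ring B] (h : Polynomial B) : Polynomial B :=
  h.sum fun n c => monomial n (c ^ n)

lemma polyEl_eq (h : Polynomial B) : polyEl F B h = pX F B (htil h) := by
  rw [polyEl, htil, Polynomial.sum, Polynomial.sum, map_sum]
  refine Finset.sum_congr rfl fun n _ => ?_
  rw [pX_monomial, Xg]
  simp [Algebra.TensorProduct.tmul_pow, Algebra.TensorProduct.tmul_mul_tmul]

lemma htil_one : htil (1 : Polynomial B) = (1 : Polynomial B) := by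
  nontriviality B
  have hs : (1 : Polynomial B).support = {0} := by
    rw [← Polynomial.C_1]; exact Polynomial.support_C one_ne_zero
  rw [htil, Polynomial.sum_def, hs, Finset.sum_singleton]
  simp

lemma polyEl_one : polyEl F B 1 = 1 := by
  rw [polyEl_eq, htil_one, map_one]

/-- Apply a linear map to all coefficients of a polynomial. -/
def coeffMap (φ : Polynomial B →ₗ[F] Polynomial B) :
    Polynomial (Polynomial B) →ₗ[F] Polynomial (Polynomial B) where
  toFun p := ⟨AddMonoidAlgebra.ofCoeff (Finsupp.mapRange φ (map_zero φ) p.toFinsupp.coeff)⟩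
  map_add' p q := by
    ext n
    simp [Polynomial.coeff]
  map_smul' c p := by
    ext n
    simp [Polynomial.coeff]

lemma coeffMap_coeff (φ : Polynomial B →ₗ[F] Polynomial B) (p : Polynomial (Polynomial B))
    (n : ℕ) : (coeffMap F B φ p).coeff n = φ (p.coeff n) := by
  simp [coeffMap, Polynomial.coeff, Finsupp.mapRange_apply]

lemma coeffMap_monomial (φ : Polynomial B →ₗ[F] Polynomial B) (n : ℕ) (a : Polynomial B) :
    coeffMap F B φ (monomial n a) = monomial n (φ a) := by
  ext k
  rw [coeffMap_coeff]
  simp only [Polynomial.coeff_monomial, apply_ite φ, map_zero]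

section GenericH
variable (h : Polynomial B)

/-- The canonical map B[x] → A_h(B). -/
def fh : Polynomial B →+* Ah F B h := (mkh F B h).comp (pX F B)

lemma fh_C (b : B) : fh F B h (C b) = incB F B h b := by
  rw [fh, RingHom.comp_apply, pX_C]; rfl

lemma fh_X : fh F B h X = mkh F B h (Xg F B) := by
  rw [fh, RingHom.comp_apply, pX_apply, eval₂_X]

/-- The defining relation in A_h. -/
lemma rel_yx : mkh F B h (Yg F B) * mkh F B h (Xg F B)
    = mkh F B h (Xg F B) * mkh F B h (Yg F B) + fh F B h (htil h) := by
  have := RingQuot.mkRingHom_rel (r := AhRel F B h) ⟨rfl, rfl⟩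
  rw [map_mul, map_add, map_mul] at this
  rw [show fh F B h (htil h) = RingQuot.mkRingHom (AhRel F B h) (polyEl F B h) by
    rw [polyEl_eq]; rfl]
  exact this

lemma tensor_comm (b : B) (m : FreeAlgebra F (Fin 2)) :
    ((1 : B) ⊗ₜ[F] m) * (b ⊗ₜ[F] (1 : FreeAlgebra F (Fin 2))) = b ⊗ₜ[F] m := by
  simp [Algebra.TensorProduct.tmul_mul_tmul]

lemma tensor_comm' (b : B) (m : FreeAlgebra F (Fin 2)) :
    (b ⊗ₜ[F] (1 : FreeAlgebra F (Fin 2))) * ((1 : B) ⊗ₜ[F] m) = b ⊗ₜ[F] m := by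
  simp [Algebra.TensorProduct.tmul_mul_tmul]

lemma y_comm_incB (b : B) : mkh F B h (Yg F B) * incB F B h b
    = incB F B h b * mkh F B h (Yg F B) := by
  rw [incB, RingHom.comp_apply, mkh, ← map_mul, ← map_mul]
  congr 1
  show (1 ⊗ₜ[F] FreeAlgebra.ι F 1) * (b ⊗ₜ[F] 1) = (b ⊗ₜ[F] 1) * (1 ⊗ₜ[F] FreeAlgebra.ι F 1)
  rw [tensor_comm, tensor_comm']

lemma x_comm_g (q : Polynomial B) : fh F B h q * mkh F B h (Xg F B)
    = mkh F B h (Xg F B) * fh F B h q := by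
  rw [← fh_X, ← map_mul, ← map_mul, Polynomial.X_mul]

lemma fh_monomial (n : ℕ) (b : B) :
    fh F B h (monomial n b) = incB F B h b * (mkh F B h (Xg F B)) ^ n := by
  rw [fh, RingHom.comp_apply, pX_monomial, map_mul, map_pow]; rfl

lemma deriv_monomial_eq (n : ℕ) (b : B) :
    derivative (monomial n b : Polynomial B) = C b * derivative (X ^ n : Polynomial B) := by
  rw [derivative_monomial, derivative_X_pow, ← mul_assoc, ← C_mul, C_mul_X_pow_eq_monomial]

/-- y * x^n = x^n * y + (Xⁿ)' g in A_h. -/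
lemma y_comm_xpow (n : ℕ) : mkh F B h (Yg F B) * (mkh F B h (Xg F B)) ^ n
    = (mkh F B h (Xg F B)) ^ n * mkh F B h (Yg F B)
      + fh F B h (derivative (X ^ n : Polynomial B) * htil h) := by
  set xp := mkh F B h (Xg F B) with hxp
  set yp := mkh F B h (Yg F B) with hyp
  set f := fh F B h with hf
  have hfx : f X = xp := fh_X F B h
  induction n with
  | zero => simp
  | succ n ih =>
    have hgX : ∀ r : Polynomial B, f r * xp = f (r * X) := by
      intro r; rw [← hfx, ← map_mul]
    have pid : (X : Polynomial B) ^ n * htil h + derivative (X ^ n : Polynomial B) * htil h * X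
        = derivative (X ^ (n+1) : Polynomial B) * htil h := by
      rw [pow_succ, derivative_mul, derivative_X, mul_one, add_mul, add_comm]
      congr 1
      rw [mul_assoc, mul_assoc, Polynomial.X_mul]
    have hxng : xp ^ n * f (htil h) = f ((X:Polynomial B) ^ n * htil h) := by
      rw [← hfx, ← map_pow, ← map_mul]
    calc yp * xp ^ (n+1) = (yp * xp ^ n) * xp := by rw [pow_succ, mul_assoc]
      _ = (xp ^ n * yp + f (derivative (X ^ n : Polynomial B) * htil h)) * xp := by rw [ih]
      _ = xp ^ n * (yp * xp) + f (derivative (X ^ n : Polynomial B) * htil h * X) := by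
          rw [add_mul, mul_assoc, hgX]
      _ = xp ^ n * (xp * yp) + (xp ^ n * f (htil h)
            + f (derivative (X ^ n : Polynomial B) * htil h * X)) := by
          rw [rel_yx, mul_add, add_assoc]
      _ = xp ^ (n+1) * yp + f (derivative (X ^ (n+1) : Polynomial B) * htil h) := by
          rw [hxng, ← map_add, pid, ← mul_assoc, ← pow_succ]

/-- y f(q) = f(q) y + f(q' g) in A_h. -/
lemma y_comm_fh (q : Polynomial B) : mkh F B h (Yg F B) * fh F B h q
    = fh F B h q * mkh F B h (Yg F B) + fh F B h (derivative q * htil h) := by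
  induction q using Polynomial.induction_on' with
  | add p q hp hq =>
    simp only [map_add, add_mul, mul_add, hp, hq]
    abel
  | monomial n b =>
    calc mkh F B h (Yg F B) * fh F B h (monomial n b)
        = mkh F B h (Yg F B) * incB F B h b * (mkh F B h (Xg F B)) ^ n := by
          rw [fh_monomial, mul_assoc]
      _ = incB F B h b * (mkh F B h (Yg F B) * (mkh F B h (Xg F B)) ^ n) := by
          rw [y_comm_incB, mul_assoc]
      _ = incB F B h b * ((mkh F B h (Xg F B)) ^ n * mkh F B h (Yg F B))
            + incB F B h b * fh F B h (derivative (X ^ n : Polynomial B) * htil h) := by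
          rw [y_comm_xpow, mul_add]
      _ = fh F B h (monomial n b) * mkh F B h (Yg F B)
            + fh F B h (derivative (monomial n b) * htil h) := by
          rw [← mul_assoc, ← fh_monomial, deriv_monomial_eq, mul_assoc, map_mul, map_mul, fh_C, map_mul]

/-- Normal form section: Σ qⱼ(X) Yʲ ↦ Σ f(qⱼ) ŷʲ. -/
def Phi : Polynomial (Polynomial B) → Ah F B h :=
  fun p => eval₂ (fh F B h) (mkh F B h (Yg F B)) p

lemma Phi_add (p q : Polynomial (Polynomial B)) :
    Phi F B h (p + q) = Phi F B h p + Phi F B h q := by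
  unfold Phi; rw [eval₂_add]

lemma Phi_monomial (j : ℕ) (q : Polynomial B) :
    Phi F B h (monomial j q) = fh F B h q * (mkh F B h (Yg F B)) ^ j := by
  unfold Phi; rw [eval₂_monomial]

lemma Phi_zero : Phi F B h 0 = 0 := by unfold Phi; rw [eval₂_zero]

lemma Phi_one : Phi F B h 1 = 1 := by unfold Phi; rw [eval₂_one]

/-- Left multiplication by a polynomial in x against `Phi`. -/
lemma Phi_Cmul (r : Polynomial B) (p : Polynomial (Polynomial B)) :
    fh F B h r * Phi F B h p = Phi F B h (C r * p) := by
  induction p using Polynomial.induction_on' with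
  | add p q hp hq => rw [mul_add, Phi_add, mul_add, hp, hq, Phi_add]
  | monomial j q => rw [Phi_monomial, C_mul_monomial, Phi_monomial, map_mul, mul_assoc]

def dgL : Polynomial B →ₗ[F] Polynomial B :=
  (LinearMap.mulRight F (htil h)).comp
    (LinearMap.restrictScalars F (Polynomial.derivative (R := B)))

lemma dgL_apply (q : Polynomial B) : dgL F B h q = derivative q * htil h := rfl

/-- Left multiplication by ŷ against `Phi`. -/
lemma Phi_ymul (p : Polynomial (Polynomial B)) :
    mkh F B h (Yg F B) * Phi F B h p
      = Phi F B h (X * p + coeffMap F B (dgL F B h) p) := by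
  induction p using Polynomial.induction_on' with
  | add p q hp hq =>
    have harg : X * (p + q) + coeffMap F B (dgL F B h) (p + q)
        = (X * p + coeffMap F B (dgL F B h) p) + (X * q + coeffMap F B (dgL F B h) q) := by
      rw [mul_add, map_add]; abel
    rw [Phi_add, mul_add, hp, hq, harg]
    exact (Phi_add F B h _ _).symm
  | monomial j q =>
    rw [Phi_monomial, ← mul_assoc, y_comm_fh, add_mul, mul_assoc, ← pow_succ',
      Polynomial.X_mul_monomial, coeffMap_monomial, Phi_add, Phi_monomial, Phi_monomial,
      dgL_apply]

/-- Every element of A_h is a normal form. -/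
lemma Phi_surj (a : Ah F B h) : ∃ p, Phi F B h p = a := by
  have hadd : ∀ a b : Ah F B h, (∃ p, Phi F B h p = a) → (∃ p, Phi F B h p = b)
      → (∃ p, Phi F B h p = a + b) := by
    rintro a b ⟨p, rfl⟩ ⟨q, rfl⟩; exact ⟨p + q, Phi_add F B h p q⟩
  have hB : ∀ (b : B) (a : Ah F B h), (∃ p, Phi F B h p = a)
      → (∃ p, Phi F B h p = incB F B h b * a) := by
    rintro b a ⟨p, rfl⟩
    exact ⟨C (C b) * p, by rw [← Phi_Cmul, fh_C]⟩
  have hfree : ∀ (m : FreeAlgebra F (Fin 2)) (a : Ah F B h), (∃ p, Phi F B h p = a)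
      → (∃ p, Phi F B h p = mkh F B h ((1:B) ⊗ₜ[F] m) * a) := by
    intro m
    induction m using FreeAlgebra.induction with
    | grade0 r =>
      intro a ha
      have : ((1:B) ⊗ₜ[F] (algebraMap F (FreeAlgebra F (Fin 2)) r))
          = (algebraMap F B r) ⊗ₜ[F] (1 : FreeAlgebra F (Fin 2)) := by
        rw [Algebra.algebraMap_eq_smul_one, Algebra.algebraMap_eq_smul_one,
          TensorProduct.smul_tmul]
      rw [this]
      exact hB _ a ha
    | grade1 i =>
      intro a ha
      obtain ⟨p, rfl⟩ := ha
      fin_cases i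
      · exact ⟨C X * p, by rw [← Phi_Cmul, fh_X]; rfl⟩
      · exact ⟨X * p + coeffMap F B (dgL F B h) p, by rw [← Phi_ymul]; rfl⟩
    | mul m₁ m₂ ih₁ ih₂ =>
      intro a ha
      have : ((1:B) ⊗ₜ[F] (m₁ * m₂)) = ((1:B) ⊗ₜ[F] m₁) * ((1:B) ⊗ₜ[F] m₂) := by
        simp [Algebra.TensorProduct.tmul_mul_tmul]
      rw [this, map_mul, mul_assoc]
      exact ih₁ _ (ih₂ a ha)
    | add m₁ m₂ ih₁ ih₂ =>
      intro a ha
      have : ((1:B) ⊗ₜ[F] (m₁ + m₂)) = ((1:B) ⊗ₜ[F] m₁) + ((1:B) ⊗ₜ[F] m₂) :=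
        TensorProduct.tmul_add _ _ _
      rw [this, map_add, add_mul]
      exact hadd _ _ (ih₁ a ha) (ih₂ a ha)
  obtain ⟨t, rfl⟩ := RingQuot.mkRingHom_surjective (AhRel F B h) a
  show ∃ p, Phi F B h p = mkh F B h t
  induction t using TensorProduct.induction_on with
  | zero => exact ⟨0, by rw [Phi_zero, map_zero]⟩
  | tmul b m =>
    have : (b ⊗ₜ[F] m) = (b ⊗ₜ[F] (1 : FreeAlgebra F (Fin 2))) * ((1:B) ⊗ₜ[F] m) := by
      simp [Algebra.TensorProduct.tmul_mul_tmul]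
    rw [this, map_mul]
    have h1 : ∃ p, Phi F B h p = mkh F B h ((1:B) ⊗ₜ[F] m) := by
      have := hfree m 1 ⟨1, Phi_one F B h⟩
      rwa [mul_one] at this
    obtain ⟨p, hp⟩ := h1
    exact hB b _ ⟨p, hp⟩
  | add t₁ t₂ ih₁ ih₂ =>
    rw [map_add]
    exact hadd _ _ ih₁ ih₂

end GenericH

section Rep

/-- coefficientwise d/dX -/
def dXL : Polynomial B →ₗ[F] Polynomial B :=
  LinearMap.restrictScalars F (Polynomial.derivative (R := B))

def dV : Module.End F (Polynomial (Polynomial B)) := coeffMap F B (dXL F B)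

def rx : Module.End F (Polynomial (Polynomial B)) :=
  Algebra.lmul F (Polynomial (Polynomial B)) (C X)

def ry : Module.End F (Polynomial (Polynomial B)) :=
  Algebra.lmul F (Polynomial (Polynomial B)) X + dV F B

def rB : B →ₐ[F] Module.End F (Polynomial (Polynomial B)) :=
  (Algebra.lmul F (Polynomial (Polynomial B))).comp
    ((Polynomial.CAlgHom (R := F)).comp (Polynomial.CAlgHom (R := F)))

lemma rB_apply (b : B) :
    rB F B b = Algebra.lmul F (Polynomial (Polynomial B)) (C (C b)) := rfl

lemma deriv_X_mul (q : Polynomial B) : derivative (X * q) = q + X * derivative q := by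
  rw [Polynomial.X_mul, derivative_mul, derivative_X, mul_one, Polynomial.X_mul, add_comm]

lemma dV_coeff (v : Polynomial (Polynomial B)) (k : ℕ) :
    (dV F B v).coeff k = derivative (v.coeff k) := by
  rw [dV, coeffMap_coeff]; rfl

lemma dV_CX (v : Polynomial (Polynomial B)) : dV F B (C X * v) = v + C X * dV F B v := by
  ext k
  rw [dV_coeff, coeff_C_mul, coeff_add, coeff_C_mul, dV_coeff, deriv_X_mul]

lemma dV_Cb (b : B) (v : Polynomial (Polynomial B)) :
    dV F B (C (C b) * v) = C (C b) * dV F B v := by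
  ext k
  rw [dV_coeff, coeff_C_mul, coeff_C_mul, dV_coeff, derivative_C_mul]

lemma lmulV (a v : Polynomial (Polynomial B)) :
    Algebra.lmul F (Polynomial (Polynomial B)) a v = a * v := rfl

lemma rel_end : ry F B * rx F B = rx F B * ry F B + 1 := by
  apply LinearMap.ext; intro v
  simp only [Module.End.mul_apply, LinearMap.add_apply, Module.End.one_apply, rx, ry, lmulV]
  have hXC : (X : Polynomial (Polynomial B)) * (C X * v) = C X * (X * v) := by
    rw [← mul_assoc, Polynomial.X_mul, mul_assoc]
  rw [dV_CX, hXC, mul_add]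
  abel

def rFree : FreeAlgebra F (Fin 2) →ₐ[F] Module.End F (Polynomial (Polynomial B)) :=
  FreeAlgebra.lift F ![rx F B, ry F B]

lemma rFree_x : rFree F B (FreeAlgebra.ι F 0) = rx F B := by
  rw [rFree, FreeAlgebra.lift_ι_apply]; rfl

lemma rFree_y : rFree F B (FreeAlgebra.ι F 1) = ry F B := by
  rw [rFree, FreeAlgebra.lift_ι_apply]; rfl

lemma rcomm : ∀ (b : B) (m : FreeAlgebra F (Fin 2)), Commute (rB F B b) (rFree F B m) := by
  intro b m
  induction m using FreeAlgebra.induction with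
  | grade0 r =>
    rw [AlgHom.commutes]
    exact (Algebra.commutes r (rB F B b)).symm
  | grade1 i =>
    have hx : Commute (rB F B b) (rx F B) :=
      (((Polynomial.commute_X (C b)).symm.map (Polynomial.C)).map
        (Algebra.lmul F (Polynomial (Polynomial B))) : _)
    have hy : Commute (rB F B b) (ry F B) := by
      rw [ry]
      refine Commute.add_right ?_ ?_
      · exact ((Polynomial.commute_X (C (C b))).symm.map
          (Algebra.lmul F (Polynomial (Polynomial B))) : _)
      · apply LinearMap.ext; intro v
        show rB F B b (dV F B v) = dV F B (rB F B b v)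
        rw [rB_apply, lmulV, lmulV, dV_Cb]
    fin_cases i
    · show Commute (rB F B b) (rFree F B (FreeAlgebra.ι F 0))
      rw [rFree_x]; exact hx
    · show Commute (rB F B b) (rFree F B (FreeAlgebra.ι F 1))
      rw [rFree_y]; exact hy
  | mul m₁ m₂ ih₁ ih₂ => rw [map_mul]; exact ih₁.mul_right ih₂
  | add m₁ m₂ ih₁ ih₂ => rw [map_add]; exact ih₁.add_right ih₂

def rT : BFreeXY F B →ₐ[F] Module.End F (Polynomial (Polynomial B)) :=
  Algebra.TensorProduct.lift (rB F B) (rFree F B) (rcomm F B)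

lemma rT_Xg : rT F B (Xg F B) = rx F B := by
  rw [Xg, rT, Algebra.TensorProduct.lift_tmul, map_one, one_mul, rFree_x]

lemma rT_Yg : rT F B (Yg F B) = ry F B := by
  rw [Yg, rT, Algebra.TensorProduct.lift_tmul, map_one, one_mul, rFree_y]

lemma rT_rel : rT F B (Yg F B * Xg F B) = rT F B (Xg F B * Yg F B + polyEl F B 1) := by
  rw [map_mul, map_add, map_mul, polyEl_one, map_one, rT_Xg, rT_Yg, rel_end]

def r1 : Ah F B 1 →ₐ[F] Module.End F (Polynomial (Polynomial B)) :=
  RingQuot.liftAlgHom F ⟨rT F B, by rintro x y ⟨rfl, rfl⟩; exact rT_rel F B⟩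

lemma r1_mk (t : BFreeXY F B) : r1 F B (mkh F B 1 t) = rT F B t := by
  have : mkh F B 1 t = RingQuot.mkAlgHom F (AhRel F B 1) t := by
    rw [mkh, ← RingQuot.mkAlgHom_coe F]; rfl
  rw [this, r1, RingQuot.liftAlgHom_mkAlgHom_apply]

lemma r1_fh (q : Polynomial B) :
    r1 F B (fh F B 1 q) = Algebra.lmul F (Polynomial (Polynomial B)) (C q) := by
  have : (r1 F B).toRingHom.comp (fh F B 1)
      = ((Algebra.lmul F (Polynomial (Polynomial B))).toRingHom.comp
          (Polynomial.C : Polynomial B →+* Polynomial (Polynomial B))) := by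
    apply Polynomial.ringHom_ext
    · intro b
      show r1 F B (fh F B 1 (C b)) = _
      rw [fh_C]
      show r1 F B (mkh F B 1 _) = _
      rw [r1_mk]
      show rT F B (b ⊗ₜ[F] 1) = _
      rw [rT, Algebra.TensorProduct.lift_tmul, map_one, mul_one]
      rfl
    · show r1 F B (fh F B 1 X) = _
      rw [fh_X, r1_mk, rT_Xg]
      rfl
  exact RingHom.congr_fun this q

end Rep

section Lead

lemma htil_coeff {B : Type*} [Ring B] (h : Polynomial B) (k : ℕ) :
    (htil h).coeff k = if k ∈ h.support then (h.coeff k) ^ k else 0 := by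
  rw [htil, Polynomial.sum_def, Polynomial.finset_sum_coeff]
  simp only [Polynomial.coeff_monomial]
  rw [Finset.sum_ite_eq' h.support k (fun n => (h.coeff n) ^ n)]

lemma notzd_pow {B : Type*} [Ring B] {b : B} (hb : NotZD b) (n : ℕ) : NotZD (b ^ n) := by
  induction n with
  | zero => intro c; simp
  | succ n ih =>
    intro c
    constructor
    · intro hc
      rw [pow_succ, ← mul_assoc] at hc
      exact (ih c).1 ((hb (c * b ^ n)).1 hc)
    · intro hc
      rw [pow_succ'] at hc
      rw [mul_assoc] at hc
      exact (ih c).2 ((hb (b ^ n * c)).2 hc)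

lemma mul_htil_ne {B : Type*} [Ring B] {h : Polynomial B} (hlead : NotZD h.leadingCoeff)
    {q : Polynomial B} (hq : q ≠ 0) : q * htil h ≠ 0 := by
  have hnt : Nontrivial B := by
    rcases subsingleton_or_nontrivial B with hs | hn
    · exact absurd (Subsingleton.elim q 0) hq
    · exact hn
  by_cases h0 : h = 0
  · subst h0
    rw [Polynomial.leadingCoeff_zero] at hlead
    exact absurd ((hlead 1).1 (mul_zero 1)) one_ne_zero
  · have hld : (htil h).coeff h.natDegree = h.leadingCoeff ^ h.natDegree := by
      rw [htil_coeff, if_pos (Polynomial.natDegree_mem_support_of_nonzero h0)]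
      rfl
    have hpow : NotZD (h.leadingCoeff ^ h.natDegree) := notzd_pow hlead h.natDegree
    have hpne : h.leadingCoeff ^ h.natDegree ≠ 0 := by
      intro hz
      rw [hz] at hpow
      exact absurd ((hpow 1).1 (mul_zero 1)) one_ne_zero
    have hcoeffhigh : ∀ k, h.natDegree < k → (htil h).coeff k = 0 := by
      intro k hk
      rw [htil_coeff]
      rw [if_neg]
      intro hmem
      exact absurd (Polynomial.le_natDegree_of_mem_supp k hmem) (not_le.mpr hk)
    have hdeg : (htil h).natDegree = h.natDegree := by
      apply le_antisymm
      · exact Polynomial.natDegree_le_iff_coeff_eq_zero.mpr hcoeffhigh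
      · apply Polynomial.le_natDegree_of_ne_zero
        rw [hld]; exact hpne
    have hltc : (htil h).leadingCoeff = h.leadingCoeff ^ h.natDegree := by
      rw [Polynomial.leadingCoeff, hdeg, hld]
    intro hzero
    have := Polynomial.coeff_mul_degree_add_degree q (htil h)
    rw [hzero, Polynomial.coeff_zero, hltc] at this
    exact hq (Polynomial.leadingCoeff_eq_zero.mp ((hpow q.leadingCoeff).1 this.symm))

lemma mul_htil_pow_ne {B : Type*} [Ring B] {h : Polynomial B} (hlead : NotZD h.leadingCoeff)
    {q : Polynomial B} (hq : q ≠ 0) (n : ℕ) : q * (htil h) ^ n ≠ 0 := by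
  induction n with
  | zero => simpa using hq
  | succ n ih =>
    rw [pow_succ, ← mul_assoc]
    exact mul_htil_ne hlead ih

end Lead

end Stmt8Aux

open Stmt8Aux Polynomial

/-- If the leading coefficient of h ∈ Z(B)[x] is not a zero divisor, then the
B-linear F-algebra homomorphism ψ : A_h(B) → A_1(B) determined by
ψ(x) = x, ψ(ŷ) = y·h is injective. -/
theorem stmt8 (h : Polynomial B) (hcen : ∀ n, h.coeff n ∈ Set.center B)
    (hlead : NotZD h.leadingCoeff)
    (ψ : Ah F B h →ₐ[F] Ah F B 1)
    (hx : ψ (mkh F B h (Xg F B)) = mkh F B 1 (Xg F B))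
    (hy : ψ (mkh F B h (Yg F B)) = mkh F B 1 (Yg F B) * mkh F B 1 (polyEl F B h))
    (hB : ∀ b : B, ψ (incB F B h b) = incB F B 1 b) :
    Function.Injective ψ := by
  rw [injective_iff_map_eq_zero]
  intro a ha
  obtain ⟨p, rfl⟩ := Phi_surj F B h a
  suffices hp : p = 0 by rw [hp, Phi_zero]
  -- ψ intertwines the two copies of B[x]
  have hψf : ∀ q : Polynomial B, ψ (fh F B h q) = fh F B 1 q := by
    have hext : (ψ.toRingHom.comp (fh F B h)) = (fh F B 1) := by
      apply Polynomial.ringHom_ext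
      · intro b
        show ψ (fh F B h (C b)) = fh F B 1 (C b)
        rw [fh_C, fh_C]; exact hB b
      · show ψ (fh F B h X) = fh F B 1 X
        rw [fh_X, fh_X]; exact hx
    exact fun q => RingHom.congr_fun hext q
  set W := r1 F B (mkh F B 1 (Yg F B) * mkh F B 1 (polyEl F B h)) with hW
  -- normal form of ψ (Phi p)
  have hNF : ∀ p : Polynomial (Polynomial B), r1 F B (ψ (Phi F B h p)) 1
      = p.sum (fun j q => C q * ((W ^ j) (1 : Polynomial (Polynomial B)))) := by
    intro p
    induction p using Polynomial.induction_on' with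
    | add p q hp hq =>
      rw [Phi_add, map_add, map_add, LinearMap.add_apply, hp, hq,
        Polynomial.sum_add_index]
      · intro i; rw [map_zero, zero_mul]
      · intro i b₁ b₂; rw [map_add, add_mul]
    | monomial j q =>
      rw [Phi_monomial, map_mul, map_pow, hψf, hy, map_mul, map_pow, r1_fh, ← hW,
        Module.End.mul_apply, Polynomial.sum_monomial_index]
      · rw [lmulV]
      · rw [map_zero, zero_mul]
  -- the action of W
  have hWv : ∀ v : Polynomial (Polynomial B),
      W v = X * (C (htil h) * v) + dV F B (C (htil h) * v) := by
    intro v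
    have hW2 : W = ry F B * Algebra.lmul F (Polynomial (Polynomial B)) (C (htil h)) := by
      rw [hW, map_mul, r1_mk, rT_Yg]
      congr 1
      have hpe : mkh F B 1 (polyEl F B h) = fh F B 1 (htil h) := by
        rw [polyEl_eq]; rfl
      rw [hpe, r1_fh]
    rw [hW2, Module.End.mul_apply, lmulV]
    rfl
  have hWcoeff : ∀ (v : Polynomial (Polynomial B)) (k : ℕ), (W v).coeff (k+1)
      = htil h * v.coeff k + derivative (htil h * v.coeff (k+1)) := by
    intro v k
    rw [hWv, coeff_add, coeff_X_mul, coeff_C_mul, dV_coeff, coeff_C_mul]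
  have hdiag : ∀ j : ℕ, ((W ^ j) (1 : Polynomial (Polynomial B))).coeff j = (htil h) ^ j
      ∧ ∀ k, j < k → ((W ^ j) (1 : Polynomial (Polynomial B))).coeff k = 0 := by
    intro j
    induction j with
    | zero =>
      constructor
      · rw [pow_zero, pow_zero, Module.End.one_apply, coeff_one_zero]
      · intro k hk
        rw [pow_zero, Module.End.one_apply, coeff_one, if_neg (by omega)]
    | succ j ih =>
      have hstep : (W ^ (j+1)) (1 : Polynomial (Polynomial B))
          = W ((W ^ j) (1 : Polynomial (Polynomial B))) := by
        rw [pow_succ', Module.End.mul_apply]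
      constructor
      · rw [hstep, hWcoeff, ih.1, ih.2 (j+1) (by omega), mul_zero, derivative_zero,
          add_zero, pow_succ']
      · intro k hk
        match k, hk with
        | (k+1), hk =>
          rw [hstep, hWcoeff, ih.2 k (by omega), ih.2 (k+1) (by omega), mul_zero]
          simp
  -- conclude
  by_contra hp0
  have hzero : r1 F B (ψ (Phi F B h p)) 1 = 0 := by rw [ha, map_zero]; rfl
  rw [hNF] at hzero
  have hcJ : (p.sum fun j q => C q * ((W ^ j) (1 : Polynomial (Polynomial B)))).coeff
      p.natDegree = p.leadingCoeff * (htil h) ^ p.natDegree := by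
    rw [Polynomial.sum_def, Polynomial.finset_sum_coeff]
    rw [Finset.sum_eq_single p.natDegree]
    · rw [coeff_C_mul, (hdiag p.natDegree).1]; rfl
    · intro j hj hne
      have hjlt : j < p.natDegree :=
        lt_of_le_of_ne (Polynomial.le_natDegree_of_mem_supp j hj) hne
      rw [coeff_C_mul, (hdiag j).2 p.natDegree hjlt, mul_zero]
    · intro hns
      exact absurd (Polynomial.natDegree_mem_support_of_nonzero hp0) hns
  rw [hzero, Polynomial.coeff_zero] at hcJ
  exact mul_htil_pow_ne hlead (Polynomial.leadingCoeff_ne_zero.mpr hp0) p.natDegree hcJ.symm
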